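/- Let (X, dist) be a compact metric space and (μ_n)_{n∈ℕ} a sequence of Borel probability measures on X. Suppose there is a sequence (ξ_n)_{n∈ℕ} of finite partitions of X into nonempty Borel sets such that: (i) sup_{A ∈ ξ_n} diam(A) → 0 as n → ∞, and (ii) for every n and every A ∈ ξ_n the sequence (μ_m(A))_{m∈ℕ} converges to a limit μ̄(A). Then (μ_n) converges weakly to some Borel probability measure μ on X, and moreover, for every continuous g : X → ℝ and every n ∈ ℕ, |Σ_{A ∈ ξ_n} μ̄(A) · sup_{x∈A} g(x) − ∫ g dμ| ≤ sup_{A ∈ ξ_n} (sup_{x∈A} g(x) − inf_{x∈A} g(x)). -/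

import Mathlib

open Filter Topology MeasureTheory

/-- weak convergence criterion for probability measures on a compact metric
space via a refining sequence of finite partitions, together with the error bound for
the approximating functionals. -/
theorem stmt7 {X : Type*} [MetricSpace X] [CompactSpace X] [MeasurableSpace X] [BorelSpace X]
    (μ : ℕ → Measure X) (hprob : ∀ n, IsProbabilityMeasure (μ n))
    (ξ : ℕ → Finset (Set X))
    (hne : ∀ n, ∀ A ∈ ξ n, A.Nonempty)
    (hmeas : ∀ n, ∀ A ∈ ξ n, MeasurableSet A)
    (hdisj : ∀ n, ∀ A ∈ ξ n, ∀ B ∈ ξ n, A ≠ B → Disjoint A B)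
    (hcover : ∀ n, ⋃₀ (↑(ξ n) : Set (Set X)) = Set.univ)
    (hdiam : ∀ ε : ℝ, 0 < ε → ∃ N, ∀ n ≥ N, ∀ A ∈ ξ n, Metric.diam A ≤ ε)
    (μbar : Set X → ℝ)
    (hconv : ∀ n, ∀ A ∈ ξ n,
      Tendsto (fun m => ((μ m) A).toReal) atTop (𝓝 (μbar A))) :
    ∃ ν : Measure X, IsProbabilityMeasure ν ∧
      (∀ g : C(X, ℝ),
        Tendsto (fun n => ∫ x, g x ∂(μ n)) atTop (𝓝 (∫ x, g x ∂ν))) ∧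
      (∀ g : C(X, ℝ), ∀ n : ℕ,
        |(∑ A ∈ ξ n, μbar A * sSup ((g : X → ℝ) '' A)) - ∫ x, g x ∂ν| ≤
          sSup ((fun A : Set X => sSup ((g : X → ℝ) '' A) - sInf ((g : X → ℝ) '' A)) ''
            (↑(ξ n) : Set (Set X)))) := by
  classical
  -- basic facts
  have hbddA : ∀ (g : C(X, ℝ)) (A : Set X), BddAbove ((g : X → ℝ) '' A) := fun g A =>
    ((isCompact_range g.continuous).bddAbove).mono (Set.image_subset_range _ _)
  have hbddB : ∀ (g : C(X, ℝ)) (A : Set X), BddBelow ((g : X → ℝ) '' A) := fun g A =>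
    ((isCompact_range g.continuous).bddBelow).mono (Set.image_subset_range _ _)
  have hint : ∀ (g : C(X, ℝ)) m, Integrable (g : X → ℝ) (μ m) := by
    intro g m
    have := hprob m
    exact (BoundedContinuousFunction.mkOfCompact g).integrable (μ m)
  have hu : ∀ n, (⋃ A ∈ ξ n, A) = (Set.univ : Set X) := by
    intro n
    rw [← hcover n, Set.sUnion_eq_biUnion]
    simp
  -- the total mass of each partition is 1
  have hsum1 : ∀ n m, ∑ A ∈ ξ n, ((μ m) A).toReal = 1 := by
    intro n m
    have h2 : ∑ A ∈ ξ n, (μ m) A = 1 := by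
      rw [← measure_biUnion_finset (fun A hA B hB hAB => hdisj n A hA B hB hAB)
        (fun A hA => hmeas n A hA), hu n, measure_univ]
    rw [← ENNReal.toReal_sum (fun A _ => measure_ne_top _ _), h2, ENNReal.toReal_one]
  -- sandwich: the integral is between the lower and upper Riemann-type sums
  have keyUp : ∀ (g : C(X, ℝ)) m n,
      ∫ x, g x ∂(μ m) ≤ ∑ A ∈ ξ n, ((μ m) A).toReal * sSup ((g : X → ℝ) '' A) := by
    intro g m n
    have := hprob m
    have husum : ∫ x, g x ∂(μ m) = ∑ A ∈ ξ n, ∫ x in A, g x ∂(μ m) := by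
      rw [← integral_biUnion_finset (ξ n) (fun A hA => hmeas n A hA)
        (fun A hA B hB hAB => hdisj n A hA B hB hAB)
        (fun A _ => (hint g m).integrableOn), hu n, Measure.restrict_univ]
    rw [husum]
    refine Finset.sum_le_sum fun A hA => ?_
    have h1 : ∫ x in A, g x ∂(μ m) ≤ ∫ x in A, sSup ((g : X → ℝ) '' A) ∂(μ m) :=
      setIntegral_mono_on (hint g m).integrableOn
        (integrableOn_const (measure_ne_top _ _)) (hmeas n A hA)
        (fun x hx => le_csSup (hbddA g A) ⟨x, hx, rfl⟩)
    rw [setIntegral_const, smul_eq_mul] at h1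
    exact h1
  have keyLo : ∀ (g : C(X, ℝ)) m n,
      ∑ A ∈ ξ n, ((μ m) A).toReal * sInf ((g : X → ℝ) '' A) ≤ ∫ x, g x ∂(μ m) := by
    intro g m n
    have := hprob m
    have husum : ∫ x, g x ∂(μ m) = ∑ A ∈ ξ n, ∫ x in A, g x ∂(μ m) := by
      rw [← integral_biUnion_finset (ξ n) (fun A hA => hmeas n A hA)
        (fun A hA B hB hAB => hdisj n A hA B hB hAB)
        (fun A _ => (hint g m).integrableOn), hu n, Measure.restrict_univ]
    rw [husum]
    refine Finset.sum_le_sum fun A hA => ?_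
    have h1 : ∫ x in A, sInf ((g : X → ℝ) '' A) ∂(μ m) ≤ ∫ x in A, g x ∂(μ m) :=
      setIntegral_mono_on (integrableOn_const (measure_ne_top _ _))
        (hint g m).integrableOn (hmeas n A hA)
        (fun x hx => csInf_le (hbddB g A) ⟨x, hx, rfl⟩)
    rw [setIntegral_const, smul_eq_mul] at h1
    exact h1
  -- convergence of the Riemann sums as m → ∞
  have hS : ∀ n (g : C(X, ℝ)),
      Tendsto (fun m => ∑ A ∈ ξ n, ((μ m) A).toReal * sSup ((g : X → ℝ) '' A)) atTop
        (𝓝 (∑ A ∈ ξ n, μbar A * sSup ((g : X → ℝ) '' A))) := fun n g =>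
    tendsto_finset_sum _ fun A hA => (hconv n A hA).mul_const _
  have hSinf : ∀ n (g : C(X, ℝ)),
      Tendsto (fun m => ∑ A ∈ ξ n, ((μ m) A).toReal * sInf ((g : X → ℝ) '' A)) atTop
        (𝓝 (∑ A ∈ ξ n, μbar A * sInf ((g : X → ℝ) '' A))) := fun n g =>
    tendsto_finset_sum _ fun A hA => (hconv n A hA).mul_const _
  -- oscillation bound from uniform continuity
  have hosc : ∀ (g : C(X, ℝ)) (ε : ℝ), 0 < ε → ∃ N, ∀ n ≥ N, ∀ A ∈ ξ n,
      sSup ((g : X → ℝ) '' A) - sInf ((g : X → ℝ) '' A) ≤ ε := by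
    intro g ε hε
    have hug := CompactSpace.uniformContinuous_of_continuous g.continuous
    rw [Metric.uniformContinuous_iff] at hug
    obtain ⟨δ, hδ, hd⟩ := hug (ε / 2) (half_pos hε)
    obtain ⟨N, hN⟩ := hdiam (δ / 2) (half_pos hδ)
    refine ⟨N, fun n hn A hA => ?_⟩
    obtain ⟨x₀, hx₀⟩ := hne n A hA
    have hAb : Bornology.IsBounded A := (isCompact_univ.isBounded).subset (Set.subset_univ A)
    have hdistg : ∀ y ∈ A, |g y - g x₀| < ε / 2 := by
      intro y hy
      have h1 : dist y x₀ ≤ δ / 2 := le_trans (Metric.dist_le_diam_of_mem hAb hy hx₀)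
        (hN n hn A hA)
      have := hd (lt_of_le_of_lt h1 (by linarith))
      rwa [Real.dist_eq] at this
    have hup : sSup ((g : X → ℝ) '' A) ≤ g x₀ + ε / 2 := by
      refine csSup_le ⟨g x₀, ⟨x₀, hx₀, rfl⟩⟩ ?_
      rintro b ⟨y, hy, rfl⟩
      have := hdistg y hy
      have := abs_lt.mp this
      linarith [this.2]
    have hlo : g x₀ - ε / 2 ≤ sInf ((g : X → ℝ) '' A) := by
      refine le_csInf ⟨g x₀, ⟨x₀, hx₀, rfl⟩⟩ ?_
      rintro b ⟨y, hy, rfl⟩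
      have := abs_lt.mp (hdistg y hy)
      linarith [this.1]
    linarith
  -- existence of the limit functional L
  have hCau : ∀ g : C(X, ℝ), ∃ l, Tendsto (fun m => ∫ x, g x ∂(μ m)) atTop (𝓝 l) := by
    intro g
    apply cauchySeq_tendsto_of_complete
    rw [Metric.cauchySeq_iff']
    intro ε hε
    obtain ⟨n₀, hn₀⟩ := hosc g (ε / 4) (by positivity)
    set S : ℕ → ℝ := fun m => ∑ A ∈ ξ n₀, ((μ m) A).toReal * sSup ((g : X → ℝ) '' A) with hSdef
    have hbound : ∀ m, |∫ x, g x ∂(μ m) - S m| ≤ ε / 4 := by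
      intro m
      have h1 := keyUp g m n₀
      have h2 := keyLo g m n₀
      have h3 : S m - ∑ A ∈ ξ n₀, ((μ m) A).toReal * sInf ((g : X → ℝ) '' A) ≤ ε / 4 := by
        rw [hSdef, ← Finset.sum_sub_distrib]
        calc ∑ A ∈ ξ n₀, (((μ m) A).toReal * sSup ((g : X → ℝ) '' A)
              - ((μ m) A).toReal * sInf ((g : X → ℝ) '' A))
            ≤ ∑ A ∈ ξ n₀, ((μ m) A).toReal * (ε / 4) := by
              refine Finset.sum_le_sum fun A hA => ?_
              rw [← mul_sub]
              exact mul_le_mul_of_nonneg_left (hn₀ n₀ le_rfl A hA) ENNReal.toReal_nonneg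
          _ = ε / 4 := by rw [← Finset.sum_mul, hsum1 n₀ m, one_mul]
      rw [abs_le]
      constructor <;> nlinarith
    have hScau : CauchySeq S := (hS n₀ g).cauchySeq
    rw [Metric.cauchySeq_iff'] at hScau
    obtain ⟨M, hM⟩ := hScau (ε / 4) (by positivity)
    refine ⟨M, fun m hm => ?_⟩
    have h1 := hbound m
    have h2 := hbound M
    have h3 := hM m hm
    rw [Real.dist_eq] at h3 ⊢
    have : |∫ x, g x ∂(μ m) - ∫ x, g x ∂(μ M)|
        ≤ |∫ x, g x ∂(μ m) - S m| + |S m - S M| + |S M - ∫ x, g x ∂(μ M)| := by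
      have := abs_sub_le (∫ x, g x ∂(μ m)) (S M) (∫ x, g x ∂(μ M))
      have := abs_sub_le (∫ x, g x ∂(μ m)) (S m) (S M)
      linarith
    have h4 : |S M - ∫ x, g x ∂(μ M)| ≤ ε / 4 := by rwa [abs_sub_comm]
    linarith
  choose L hL using hCau
  -- properties of L
  have hLnonneg : ∀ g : C(X, ℝ), (∀ x, 0 ≤ g x) → 0 ≤ L g := by
    intro g hg
    exact ge_of_tendsto (hL g) (Eventually.of_forall fun m => integral_nonneg hg)
  have hLmono : ∀ g₁ g₂ : C(X, ℝ), (∀ x, g₁ x ≤ g₂ x) → L g₁ ≤ L g₂ := by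
    intro g₁ g₂ h
    exact le_of_tendsto_of_tendsto' (hL g₁) (hL g₂)
      (fun m => integral_mono (hint g₁ m) (hint g₂ m) h)
  have hLone : L 1 = 1 := by
    have h1 : Tendsto (fun m => ∫ x, (1 : C(X, ℝ)) x ∂(μ m)) atTop (𝓝 1) := by
      have : ∀ m, ∫ x, (1 : C(X, ℝ)) x ∂(μ m) = 1 := by
        intro m
        have := hprob m
        simp
      simp only [this]
      exact tendsto_const_nhds
    exact tendsto_nhds_unique (hL 1) h1
  have hLadd : ∀ g₁ g₂ : C(X, ℝ), L (g₁ + g₂) = L g₁ + L g₂ := by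
    intro g₁ g₂
    have h1 : Tendsto (fun m => ∫ x, (g₁ + g₂) x ∂(μ m)) atTop (𝓝 (L g₁ + L g₂)) := by
      have heq : ∀ m, ∫ x, (g₁ + g₂) x ∂(μ m) = (∫ x, g₁ x ∂(μ m)) + ∫ x, g₂ x ∂(μ m) := by
        intro m
        simp only [ContinuousMap.add_apply]
        exact integral_add (hint g₁ m) (hint g₂ m)
      simp only [heq]
      exact (hL g₁).add (hL g₂)
    exact tendsto_nhds_unique (hL (g₁ + g₂)) h1
  -- the Riesz-type content
  set F : Set X → Set C(X, ℝ) := fun K => {f | (∀ x, 0 ≤ f x) ∧ ∀ x ∈ K, 1 ≤ f x} with hF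
  set lam0 : Set X → ℝ := fun K => sInf (L '' F K) with hlam0
  have hFone : ∀ K : Set X, (1 : C(X, ℝ)) ∈ F K := by
    intro K
    constructor
    · intro x; simp
    · intro x _; simp
  have hFne : ∀ K : Set X, (L '' F K).Nonempty := fun K => ⟨L 1, ⟨1, hFone K, rfl⟩⟩
  have hFbdd : ∀ K : Set X, BddBelow (L '' F K) := by
    intro K
    refine ⟨0, ?_⟩
    rintro y ⟨f, hf, rfl⟩
    exact hLnonneg f hf.1
  have hlam0_le : ∀ (K : Set X) (f : C(X, ℝ)), f ∈ F K → lam0 K ≤ L f := by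
    intro K f hf
    exact csInf_le (hFbdd K) ⟨f, hf, rfl⟩
  have hlam0_nonneg : ∀ K : Set X, 0 ≤ lam0 K := by
    intro K
    refine le_csInf (hFne K) ?_
    rintro y ⟨f, hf, rfl⟩
    exact hLnonneg f hf.1
  have hlam0_mono : ∀ K₁ K₂ : Set X, K₁ ⊆ K₂ → lam0 K₁ ≤ lam0 K₂ := by
    intro K₁ K₂ h
    refine csInf_le_csInf (hFbdd K₁) (hFne K₂) ?_
    rintro y ⟨f, hf, rfl⟩
    exact ⟨f, ⟨hf.1, fun x hx => hf.2 x (h hx)⟩, rfl⟩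
  have hlam0_univ : lam0 Set.univ = 1 := by
    refine le_antisymm ?_ ?_
    · have := hlam0_le Set.univ 1 (hFone _)
      rwa [hLone] at this
    · refine le_csInf (hFne _) ?_
      rintro y ⟨f, hf, rfl⟩
      have : L 1 ≤ L f := hLmono _ _ (fun x => by simpa using hf.2 x (Set.mem_univ x))
      rwa [hLone] at this
  have hlam0_subadd : ∀ K₁ K₂ : Set X, lam0 (K₁ ∪ K₂) ≤ lam0 K₁ + lam0 K₂ := by
    intro K₁ K₂
    refine le_of_forall_pos_le_add fun ε hε => ?_
    obtain ⟨y₁, ⟨f₁, hf₁, rfl⟩, hy₁⟩ := exists_lt_of_csInf_lt (hFne K₁)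
      (lt_add_of_pos_right (lam0 K₁) (half_pos hε))
    obtain ⟨y₂, ⟨f₂, hf₂, rfl⟩, hy₂⟩ := exists_lt_of_csInf_lt (hFne K₂)
      (lt_add_of_pos_right (lam0 K₂) (half_pos hε))
    have hmem : f₁ + f₂ ∈ F (K₁ ∪ K₂) := by
      constructor
      · intro x
        simp only [ContinuousMap.add_apply]
        exact add_nonneg (hf₁.1 x) (hf₂.1 x)
      · rintro x (hx | hx)
        · simp only [ContinuousMap.add_apply]
          have := hf₁.2 x hx
          have := hf₂.1 x
          linarith
        · simp only [ContinuousMap.add_apply]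
          have := hf₂.2 x hx
          have := hf₁.1 x
          linarith
    have := hlam0_le _ _ hmem
    rw [hLadd] at this
    linarith
  have hlam0_disj : ∀ K₁ K₂ : Set X, IsClosed K₁ → IsClosed K₂ → Disjoint K₁ K₂ →
      lam0 (K₁ ∪ K₂) = lam0 K₁ + lam0 K₂ := by
    intro K₁ K₂ hc₁ hc₂ hd
    refine le_antisymm (hlam0_subadd K₁ K₂) ?_
    refine le_of_forall_pos_le_add fun ε hε => ?_
    obtain ⟨y, ⟨f, hf, rfl⟩, hy⟩ := exists_lt_of_csInf_lt (hFne (K₁ ∪ K₂))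
      (lt_add_of_pos_right (lam0 (K₁ ∪ K₂)) hε)
    obtain ⟨φ, hφ₂, hφ₁, hφ01⟩ := exists_continuous_zero_one_of_isClosed hc₂ hc₁ hd.symm
    -- φ = 0 on K₂, φ = 1 on K₁
    have hmem₁ : f * φ ∈ F K₁ := by
      constructor
      · intro x
        exact mul_nonneg (hf.1 x) (hφ01 x).1
      · intro x hx
        have h1 : φ x = 1 := hφ₁ hx
        have h2 : 1 ≤ f x := hf.2 x (Or.inl hx)
        simp only [ContinuousMap.mul_apply, h1, mul_one]
        exact h2
    have hmem₂ : f * (1 - φ) ∈ F K₂ := by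
      constructor
      · intro x
        simp only [ContinuousMap.mul_apply, ContinuousMap.sub_apply, ContinuousMap.one_apply]
        exact mul_nonneg (hf.1 x) (by linarith [(hφ01 x).2])
      · intro x hx
        have h1 : φ x = 0 := hφ₂ hx
        have h2 : 1 ≤ f x := hf.2 x (Or.inr hx)
        simp only [ContinuousMap.mul_apply, ContinuousMap.sub_apply, ContinuousMap.one_apply, h1]
        linarith
    have hsum : f * φ + f * (1 - φ) = f := by
      ext x
      simp only [ContinuousMap.add_apply, ContinuousMap.mul_apply, ContinuousMap.sub_apply,
        ContinuousMap.one_apply]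
      ring
    have h1 := hlam0_le _ _ hmem₁
    have h2 := hlam0_le _ _ hmem₂
    have h3 : L (f * φ) + L (f * (1 - φ)) = L f := by
      rw [← hLadd, hsum]
    linarith
  -- build the content and the measure ν
  set lam : TopologicalSpace.Compacts X → NNReal := fun K => Real.toNNReal (lam0 K) with hlam
  have hlam_coe : ∀ K : TopologicalSpace.Compacts X, (lam K : ℝ) = lam0 K := by
    intro K
    exact Real.coe_toNNReal _ (hlam0_nonneg K)
  set Γ : MeasureTheory.Content X :=
    { toFun := lam
      mono' := by
        intro K₁ K₂ h
        rw [← NNReal.coe_le_coe, hlam_coe, hlam_coe]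
        exact hlam0_mono _ _ h
      sup_disjoint' := by
        intro K₁ K₂ hd h₁ h₂
        have : lam0 ((K₁ : Set X) ∪ K₂) = lam0 K₁ + lam0 K₂ := hlam0_disj _ _ h₁ h₂ hd
        simp only [hlam]
        rw [TopologicalSpace.Compacts.coe_sup]
        rw [this, Real.toNNReal_add (hlam0_nonneg _) (hlam0_nonneg _)]
      sup_le' := by
        intro K₁ K₂
        rw [← NNReal.coe_le_coe, hlam_coe, NNReal.coe_add, hlam_coe, hlam_coe,
          TopologicalSpace.Compacts.coe_sup]
        exact hlam0_subadd _ _ } with hΓ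
  set ν : Measure X := Γ.measure with hν
  have hΓval : ∀ K : TopologicalSpace.Compacts X, Γ K = (Real.toNNReal (lam0 K) : ENNReal) := by
    intro K
    rfl
  have hν_univ : ν Set.univ = 1 := by
    rw [hν, Γ.measure_apply MeasurableSet.univ,
      Γ.outerMeasure_of_isOpen Set.univ isOpen_univ,
      Γ.innerContent_of_isCompact isCompact_univ isOpen_univ, hΓval]
    simp [hlam0_univ]
  have hνprob : IsProbabilityMeasure ν := ⟨hν_univ⟩
  -- weak convergence via portmanteau
  set P : ℕ → ProbabilityMeasure X := fun m => ⟨μ m, hprob m⟩ with hP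
  set Pν : ProbabilityMeasure X := ⟨ν, hνprob⟩ with hPν
  have h_opens : ∀ G : Set X, IsOpen G → Pν G ≤ atTop.liminf (fun i => P i G) := by
    intro G hG
    refine le_of_forall_lt fun c hc => ?_
    obtain ⟨c', hc1, hc2⟩ := exists_between hc
    -- find a compact K ⊆ G with c' < Γ K
    have hcE : (c' : ENNReal) < ν G := by
      have h1 : (Pν G : ENNReal) = ν G := Pν.ennreal_coeFn_eq_coeFn_toMeasure G
      rw [← h1]
      exact_mod_cast hc2
    have hνG : ν G = Γ.innerContent ⟨G, hG⟩ := by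
      rw [hν, Γ.measure_apply hG.measurableSet, Γ.outerMeasure_of_isOpen G hG]
    rw [hνG, MeasureTheory.Content.innerContent] at hcE
    obtain ⟨K, hK⟩ := lt_iSup_iff.mp hcE
    obtain ⟨hKG, hK⟩ := lt_iSup_iff.mp hK
    -- Urysohn function: 1 on K, 0 outside G
    have hKc : IsClosed (K : Set X) := K.isCompact.isClosed
    have hGc : IsClosed Gᶜ := hG.isClosed_compl
    have hdisjKG : Disjoint (Gᶜ : Set X) (K : Set X) :=
      Set.disjoint_left.mpr fun x hx hxK => hx (hKG hxK)
    obtain ⟨φ, hφ0, hφ1, hφ01⟩ := exists_continuous_zero_one_of_isClosed hGc hKc hdisjKG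
    have hφF : φ ∈ F K := ⟨fun x => (hφ01 x).1, fun x hx => (hφ1 hx).ge⟩
    have hcφ : (c' : ℝ) < L φ := by
      have h2 : (c' : ENNReal) < (Real.toNNReal (lam0 K) : ENNReal) := by
        rw [← hΓval]; exact hK
      have h3 : c' < Real.toNNReal (lam0 K) := by exact_mod_cast h2
      have h4 : (c' : ℝ) < lam0 K := Real.lt_toNNReal_iff_coe_lt.mp h3
      exact lt_of_lt_of_le h4 (hlam0_le K φ hφF)
    -- eventually the integrals of φ exceed c'
    have hev : ∀ᶠ m in atTop, (c' : ℝ) < ∫ x, φ x ∂(μ m) :=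
      (hL φ).eventually_const_lt hcφ
    have hφle : ∀ m, ∫ x, φ x ∂(μ m) ≤ ((μ m) G).toReal := by
      intro m
      have := hprob m
      have hsplit : (∫ x in G, φ x ∂(μ m)) + ∫ x in Gᶜ, φ x ∂(μ m) = ∫ x, φ x ∂(μ m) :=
        integral_add_compl hG.measurableSet (hint φ m)
      have hz : ∫ x in Gᶜ, φ x ∂(μ m) = 0 := by
        refine setIntegral_eq_zero_of_forall_eq_zero fun x hx => hφ0 hx
      have hle : ∫ x in G, φ x ∂(μ m) ≤ ∫ x in G, (1 : ℝ) ∂(μ m) :=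
        setIntegral_mono_on (hint φ m).integrableOn
          (integrableOn_const (measure_ne_top _ _)) hG.measurableSet
          (fun x _ => (hφ01 x).2)
      rw [setIntegral_const, smul_eq_mul, mul_one, measureReal_def] at hle
      linarith
    have hev' : ∀ᶠ m in atTop, c' ≤ P m G := by
      filter_upwards [hev] with m hm
      have h5 : (c' : ℝ) ≤ ((μ m) G).toReal := le_trans hm.le (hφle m)
      have h6 : P m G = ((μ m) G).toNNReal := rfl
      rw [h6, ← NNReal.coe_le_coe]
      exact h5
    have hlim : c' ≤ atTop.liminf (fun i => P i G) := by
      refine le_liminf_of_le ?_ hev'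
      exact (Filter.isBoundedUnder_of
        ⟨1, fun i => (P i).apply_le_one G⟩).isCoboundedUnder_ge
    exact lt_of_lt_of_le hc1 hlim
  have hweak : Tendsto (fun i => P i) atTop (𝓝 Pν) :=
    MeasureTheory.tendsto_of_forall_isOpen_le_liminf h_opens
  have hconvint : ∀ g : C(X, ℝ),
      Tendsto (fun m => ∫ x, g x ∂(μ m)) atTop (𝓝 (∫ x, g x ∂ν)) := by
    intro g
    have := (ProbabilityMeasure.tendsto_iff_forall_integral_tendsto.mp hweak)
      (BoundedContinuousFunction.mkOfCompact g)
    exact this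
  have hLν : ∀ g : C(X, ℝ), L g = ∫ x, g x ∂ν := fun g =>
    tendsto_nhds_unique (hL g) (hconvint g)
  refine ⟨ν, hνprob, hconvint, ?_⟩
  -- the error bound
  intro g n
  have hμbar_nonneg : ∀ A ∈ ξ n, 0 ≤ μbar A := fun A hA =>
    ge_of_tendsto (hconv n A hA) (Eventually.of_forall fun m => ENNReal.toReal_nonneg)
  have hμbar_sum : ∑ A ∈ ξ n, μbar A = 1 := by
    have h1 : Tendsto (fun m => ∑ A ∈ ξ n, ((μ m) A).toReal) atTop (𝓝 (∑ A ∈ ξ n, μbar A)) :=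
      tendsto_finset_sum _ fun A hA => hconv n A hA
    have h2 : Tendsto (fun m => ∑ A ∈ ξ n, ((μ m) A).toReal) atTop (𝓝 1) := by
      simp only [hsum1 n]
      exact tendsto_const_nhds
    exact tendsto_nhds_unique h1 h2
  have hub : L g ≤ ∑ A ∈ ξ n, μbar A * sSup ((g : X → ℝ) '' A) :=
    le_of_tendsto_of_tendsto' (hL g) (hS n g) (fun m => keyUp g m n)
  have hlb : ∑ A ∈ ξ n, μbar A * sInf ((g : X → ℝ) '' A) ≤ L g :=
    le_of_tendsto_of_tendsto' (hSinf n g) (hL g) (fun m => keyLo g m n)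
  set M := sSup ((fun A : Set X => sSup ((g : X → ℝ) '' A) - sInf ((g : X → ℝ) '' A)) ''
    (↑(ξ n) : Set (Set X))) with hM
  have hξnne : (ξ n).Nonempty := by
    by_contra hc
    rw [Finset.not_nonempty_iff_eq_empty] at hc
    have h0 : (Set.univ : Set X) = ∅ := by
      rw [← hcover n, hc]; simp
    have h1 := (hprob 0).measure_univ
    rw [h0, measure_empty] at h1
    exact zero_ne_one h1
  have hMbdd : BddAbove ((fun A : Set X => sSup ((g : X → ℝ) '' A) - sInf ((g : X → ℝ) '' A)) ''
      (↑(ξ n) : Set (Set X))) := ((ξ n).finite_toSet.image _).bddAbove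
  have hM_ge : ∀ A ∈ ξ n, sSup ((g : X → ℝ) '' A) - sInf ((g : X → ℝ) '' A) ≤ M := by
    intro A hA
    exact le_csSup hMbdd (Set.mem_image_of_mem _ hA)
  have hM_nonneg : 0 ≤ M := by
    obtain ⟨A₀, hA₀⟩ := hξnne
    obtain ⟨x₀, hx₀⟩ := hne n A₀ hA₀
    have h1 : sInf ((g : X → ℝ) '' A₀) ≤ g x₀ := csInf_le (hbddB g A₀) ⟨x₀, hx₀, rfl⟩
    have h2 : g x₀ ≤ sSup ((g : X → ℝ) '' A₀) := le_csSup (hbddA g A₀) ⟨x₀, hx₀, rfl⟩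
    have := hM_ge A₀ hA₀
    linarith
  have hdiff : ∑ A ∈ ξ n, μbar A * sSup ((g : X → ℝ) '' A)
      - ∑ A ∈ ξ n, μbar A * sInf ((g : X → ℝ) '' A) ≤ M := by
    rw [← Finset.sum_sub_distrib]
    calc ∑ A ∈ ξ n, (μbar A * sSup ((g : X → ℝ) '' A) - μbar A * sInf ((g : X → ℝ) '' A))
        ≤ ∑ A ∈ ξ n, μbar A * M := by
          refine Finset.sum_le_sum fun A hA => ?_
          rw [← mul_sub]
          exact mul_le_mul_of_nonneg_left (hM_ge A hA) (hμbar_nonneg A hA)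
      _ = M := by rw [← Finset.sum_mul, hμbar_sum, one_mul]
  rw [← hLν g]
  rw [abs_le]
  constructor
  · linarith
  · linarith
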